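/- Let n ≥ 3 be an odd integer. Then A_n = { 2^r · a : r ∈ ℤ, r ≥ 0, a ∈ ℤ, a odd, a ≥ n + 2^{r+1} − 2 }. -/

import Mathlib

/-- For an integer `n ≥ 2`, `A n = { l*(n+2*j) : l, j ∈ ℤ, 1 ≤ l ≤ j+1 }`. -/
def Aset (n : ℤ) : Set ℤ :=
  {m : ℤ | ∃ l j : ℤ, 1 ≤ l ∧ l ≤ j + 1 ∧ m = l * (n + 2 * j)}

/-- Every positive integer is a power of two times an odd positive integer. -/
lemma exists_two_pow_mul_odd (l : ℤ) (hl : 1 ≤ l) :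
    ∃ (r : ℕ) (a : ℤ), Odd a ∧ 1 ≤ a ∧ l = 2 ^ r * a := by
  obtain ⟨k, rfl⟩ : ∃ k : ℕ, l = (k : ℤ) := ⟨l.toNat, (Int.toNat_of_nonneg (by linarith)).symm⟩
  have hk : k ≠ 0 := by
    rintro rfl; simp at hl
  refine ⟨k.factorization 2, (k / 2 ^ k.factorization 2 : ℕ), ?_, ?_, ?_⟩
  · have h2 : ¬ (2 : ℕ) ∣ (k / 2 ^ k.factorization 2) :=
      Nat.not_dvd_ordCompl Nat.prime_two hk
    rw [← Int.not_even_iff_odd]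
    intro hev
    exact h2 (by exact_mod_cast hev.two_dvd)
  · have : 0 < k / 2 ^ k.factorization 2 := Nat.ordCompl_pos 2 hk
    exact_mod_cast this
  · have := Nat.ordProj_mul_ordCompl_eq_self k 2
    exact_mod_cast this.symm

/-- If `n ≥ 3` is odd, then
`A_n = { 2^r * a : r ∈ ℤ, r ≥ 0, a odd, a ≥ n + 2^(r+1) - 2 }`. -/
theorem stmt1 (n : ℤ) (hn : 3 ≤ n) (hno : Odd n) :
    Aset n = {m : ℤ | ∃ (r : ℕ) (a : ℤ), Odd a ∧ n + 2 ^ (r + 1) - 2 ≤ a ∧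
      m = 2 ^ r * a} := by
  ext m
  simp only [Aset, Set.mem_setOf_eq]
  constructor
  · rintro ⟨l, j, hl1, hlj, rfl⟩
    obtain ⟨r, a', ha'odd, ha'1, rfl⟩ := exists_two_pow_mul_odd l hl1
    refine ⟨r, a' * (n + 2 * j), ?_, ?_, by ring⟩
    · exact ha'odd.mul (by obtain ⟨c, hc⟩ := hno; exact ⟨c + j, by omega⟩)
    · have hpow : (1 : ℤ) ≤ 2 ^ r := one_le_pow₀ (by norm_num)
      have h2 : (2 : ℤ) ^ (r + 1) = 2 * 2 ^ r := by ring
      rw [h2]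
      nlinarith [mul_nonneg (sub_nonneg.mpr ha'1) (sub_nonneg.mpr hn),
        mul_nonneg (mul_nonneg (sub_nonneg.mpr hpow) (sub_nonneg.mpr ha'1)) (by linarith : (0:ℤ) ≤ a' + 1),
        mul_nonneg (by linarith : (0:ℤ) ≤ a') (by linarith : (0:ℤ) ≤ j + 1 - 2 ^ r * a'),
        mul_nonneg (sub_nonneg.mpr ha'1) (by linarith : (0:ℤ) ≤ a' - 1)]
  · rintro ⟨r, a, haodd, hage, rfl⟩
    obtain ⟨k, hk⟩ := haodd.sub_odd hno
    refine ⟨2 ^ r, k, one_le_pow₀ (by norm_num), ?_, ?_⟩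
    · have h2 : (2 : ℤ) ^ (r + 1) = 2 * 2 ^ r := by ring
      rw [h2] at hage
      omega
    · have : n + 2 * k = a := by omega
      rw [this]
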